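/- Abstract form of Lemma 2.2(3) (degeneracy of the limiting penalized second variation): Let E be a real normed vector space, W, P1, P2 : E → ℝ twice continuously Fréchet differentiable, ã₀ > 0 and b ∈ ℝ. Let f : [0,ã₀) → E be continuously differentiable (with one-sided derivative at 0) and twice differentiable on (0,ã₀), and let α, β : [0,ã₀) → ℝ be continuous, differentiable on (0,ã₀), with ã·α'(ã) → 0 as ã → 0⁺. Assume that for every ã ∈ (0,ã₀): P1(f(ã)) = ã², P2(f(ã)) = b, and DW(f(ã)) = α(ã)·DP1(f(ã)) + β(ã)·DP2(f(ã)). Then, with α⁰ := α(0), β⁰ := β(0) and φ := f'(0), one has D²W(f(0))(φ,φ) − α⁰·D²P1(f(0))(φ,φ) − β⁰·D²P2(f(0))(φ,φ) = 0; i.e., the limiting variation φ is a null direction of the second variation of the penalized functional W − α⁰P1 − β⁰P2 at f(0). -/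

import Mathlib

open Set

/-- Abstract form of Lemma 2.2(3): degeneracy of the limiting penalized second variation.
Here `a` plays the role of `ã` (the square root of the first conformal coordinate).
The limiting variation `φ = f'(0)` is a null direction of the second variation of the
penalized functional `W − α⁰·P1 − β⁰·P2` at `f(0)`. -/
theorem limiting_penalized_second_variation_degenerate
    {E : Type*} [NormedAddCommGroup E] [NormedSpace ℝ E]
    (W P1 P2 : E → ℝ)
    (hW : ContDiff ℝ 2 W) (hP1 : ContDiff ℝ 2 P1) (hP2 : ContDiff ℝ 2 P2)
    (a₀ : ℝ) (ha₀ : 0 < a₀) (b : ℝ)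
    (f f' f'' : ℝ → E) (α β α' β' : ℝ → ℝ)
    (hf : ∀ a ∈ Ico (0:ℝ) a₀, HasDerivWithinAt f (f' a) (Ico (0:ℝ) a₀) a)
    (hf'cont : ContinuousOn f' (Ico (0:ℝ) a₀))
    (hf'' : ∀ a ∈ Ioo (0:ℝ) a₀, HasDerivAt f' (f'' a) a)
    (hαcont : ContinuousOn α (Ico (0:ℝ) a₀))
    (hβcont : ContinuousOn β (Ico (0:ℝ) a₀))
    (hα : ∀ a ∈ Ioo (0:ℝ) a₀, HasDerivAt α (α' a) a)
    (hβ : ∀ a ∈ Ioo (0:ℝ) a₀, HasDerivAt β (β' a) a)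
    (htend : Filter.Tendsto (fun a => a * α' a) (nhdsWithin 0 (Ioi (0:ℝ))) (nhds 0))
    (hP1f : ∀ a ∈ Ioo (0:ℝ) a₀, P1 (f a) = a ^ 2)
    (hP2f : ∀ a ∈ Ioo (0:ℝ) a₀, P2 (f a) = b)
    (hEL : ∀ a ∈ Ioo (0:ℝ) a₀, fderiv ℝ W (f a)
        = α a • fderiv ℝ P1 (f a) + β a • fderiv ℝ P2 (f a)) :
    fderiv ℝ (fderiv ℝ W) (f 0) (f' 0) (f' 0)
      - α 0 * (fderiv ℝ (fderiv ℝ P1) (f 0) (f' 0) (f' 0))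
      - β 0 * (fderiv ℝ (fderiv ℝ P2) (f 0) (f' 0) (f' 0))
    = 0 := by
  set F : ℝ → ℝ := fun a =>
    fderiv ℝ (fderiv ℝ W) (f a) (f' a) (f' a)
      - α a * (fderiv ℝ (fderiv ℝ P1) (f a) (f' a) (f' a))
      - β a * (fderiv ℝ (fderiv ℝ P2) (f a) (f' a) (f' a)) with hF
  -- C¹ smoothness of the first derivatives
  have hW1 : ContDiff ℝ 1 (fderiv ℝ W) := hW.fderiv_right (by norm_num)
  have hP11 : ContDiff ℝ 1 (fderiv ℝ P1) := hP1.fderiv_right (by norm_num)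
  have hP21 : ContDiff ℝ 1 (fderiv ℝ P2) := hP2.fderiv_right (by norm_num)
  -- continuity of f on Ico
  have hfcont : ContinuousOn f (Ico (0:ℝ) a₀) := fun a ha => (hf a ha).continuousWithinAt
  -- Key identity on Ioo
  have key : ∀ a ∈ Ioo (0:ℝ) a₀, F a = 2 * (a * α' a) := by
    intro a ha
    have haIco : a ∈ Ico (0:ℝ) a₀ := ⟨le_of_lt ha.1, ha.2⟩
    have hnhds : Ico (0:ℝ) a₀ ∈ nhds a := Ico_mem_nhds ha.1 ha.2
    have hIoo_nhds : Ioo (0:ℝ) a₀ ∈ nhds a := Ioo_mem_nhds ha.1 ha.2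
    have hfa : HasDerivAt f (f' a) a := (hf a haIco).hasDerivAt hnhds
    -- derivative of a ↦ fderiv W (f a)
    have hGW : HasDerivAt (fun x => fderiv ℝ W (f x))
        (fderiv ℝ (fderiv ℝ W) (f a) (f' a)) a :=
      ((hW1.differentiable one_ne_zero (f a)).hasFDerivAt).comp_hasDerivAt a hfa
    have hGP1 : HasDerivAt (fun x => fderiv ℝ P1 (f x))
        (fderiv ℝ (fderiv ℝ P1) (f a) (f' a)) a :=
      ((hP11.differentiable one_ne_zero (f a)).hasFDerivAt).comp_hasDerivAt a hfa
    have hGP2 : HasDerivAt (fun x => fderiv ℝ P2 (f x))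
        (fderiv ℝ (fderiv ℝ P2) (f a) (f' a)) a :=
      ((hP21.differentiable one_ne_zero (f a)).hasFDerivAt).comp_hasDerivAt a hfa
    -- derivative of the right-hand side of the Euler–Lagrange relation
    have hR : HasDerivAt (fun x => α x • fderiv ℝ P1 (f x) + β x • fderiv ℝ P2 (f x))
        ((α a • fderiv ℝ (fderiv ℝ P1) (f a) (f' a) + α' a • fderiv ℝ P1 (f a))
          + (β a • fderiv ℝ (fderiv ℝ P2) (f a) (f' a) + β' a • fderiv ℝ P2 (f a))) a :=
      ((hα a ha).smul hGP1).add ((hβ a ha).smul hGP2)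
    have heq : (fun x => fderiv ℝ W (f x)) =ᶠ[nhds a]
        (fun x => α x • fderiv ℝ P1 (f x) + β x • fderiv ℝ P2 (f x)) :=
      Filter.eventually_of_mem hIoo_nhds (fun x hx => hEL x hx)
    have hGW' : HasDerivAt (fun x => fderiv ℝ W (f x))
        ((α a • fderiv ℝ (fderiv ℝ P1) (f a) (f' a) + α' a • fderiv ℝ P1 (f a))
          + (β a • fderiv ℝ (fderiv ℝ P2) (f a) (f' a) + β' a • fderiv ℝ P2 (f a))) a :=
      hR.congr_of_eventuallyEq heq
    have hderiv_eq := hGW.unique hGW'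
    -- chain rule: derivative of P1 ∘ f and P2 ∘ f
    have hc1 : HasDerivAt (fun x => P1 (f x)) (fderiv ℝ P1 (f a) (f' a)) a :=
      ((hP1.differentiable two_ne_zero (f a)).hasFDerivAt).comp_hasDerivAt a hfa
    have hc2 : HasDerivAt (fun x => P2 (f x)) (fderiv ℝ P2 (f a) (f' a)) a :=
      ((hP2.differentiable two_ne_zero (f a)).hasFDerivAt).comp_hasDerivAt a hfa
    have hsq : HasDerivAt (fun x : ℝ => x ^ 2) (2 * a) a := by
      simpa using (hasDerivAt_pow 2 a)
    have hc1' : HasDerivAt (fun x => P1 (f x)) (2 * a) a :=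
      hsq.congr_of_eventuallyEq (Filter.eventually_of_mem hIoo_nhds
        (fun x hx => (hP1f x hx)))
    have hP1val : fderiv ℝ P1 (f a) (f' a) = 2 * a := hc1.unique hc1'
    have hc2' : HasDerivAt (fun x => P2 (f x)) 0 a :=
      (hasDerivAt_const a b).congr_of_eventuallyEq (Filter.eventually_of_mem hIoo_nhds
        (fun x hx => (hP2f x hx)))
    have hP2val : fderiv ℝ P2 (f a) (f' a) = 0 := hc2.unique hc2'
    -- evaluate the derivative identity at f' a
    have := congrArg (fun (L : E →L[ℝ] ℝ) => L (f' a)) hderiv_eq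
    simp only [ContinuousLinearMap.add_apply, ContinuousLinearMap.coe_smul',
      Pi.smul_apply, smul_eq_mul] at this
    rw [hP1val, hP2val] at this
    simp only [hF]
    rw [this]
    ring
  -- continuity of F on Ico
  have hFcont : ContinuousOn F (Ico (0:ℝ) a₀) := by
    have h1 : ContinuousOn (fun a => fderiv ℝ (fderiv ℝ W) (f a)) (Ico (0:ℝ) a₀) :=
      ((hW1.continuous_fderiv one_ne_zero).comp_continuousOn hfcont)
    have h2 : ContinuousOn (fun a => fderiv ℝ (fderiv ℝ P1) (f a)) (Ico (0:ℝ) a₀) :=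
      ((hP11.continuous_fderiv one_ne_zero).comp_continuousOn hfcont)
    have h3 : ContinuousOn (fun a => fderiv ℝ (fderiv ℝ P2) (f a)) (Ico (0:ℝ) a₀) :=
      ((hP21.continuous_fderiv one_ne_zero).comp_continuousOn hfcont)
    exact (((h1.clm_apply hf'cont).clm_apply hf'cont).sub
      (hαcont.mul ((h2.clm_apply hf'cont).clm_apply hf'cont))).sub
      (hβcont.mul ((h3.clm_apply hf'cont).clm_apply hf'cont))
  -- take the limit a → 0⁺
  have hne : (nhdsWithin (0:ℝ) (Ioo (0:ℝ) a₀)).NeBot := left_nhdsWithin_Ioo_neBot ha₀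
  have hlim1 : Filter.Tendsto F (nhdsWithin 0 (Ioo (0:ℝ) a₀)) (nhds (F 0)) := by
    have := (hFcont 0 ⟨le_refl _, ha₀⟩).tendsto
    exact this.mono_left (nhdsWithin_mono 0 Ioo_subset_Ico_self)
  have hlim2 : Filter.Tendsto F (nhdsWithin 0 (Ioo (0:ℝ) a₀)) (nhds 0) := by
    have h2 : Filter.Tendsto (fun a => 2 * (a * α' a)) (nhdsWithin 0 (Ioo (0:ℝ) a₀))
        (nhds 0) := by
      have hsub : Ioo (0:ℝ) a₀ ⊆ Ioi (0:ℝ) := Ioo_subset_Ioi_self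
      have := (htend.const_mul 2).mono_left (nhdsWithin_mono 0 hsub)
      simpa using this
    refine h2.congr' ?_
    exact Filter.eventually_of_mem self_mem_nhdsWithin (fun x hx => (key x hx).symm)
  exact (tendsto_nhds_unique hlim1 hlim2)
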